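/- Let d, e ≥ 1, let s = (s_1,…,s_d) and t = (t_1,…,t_e) be sequences of positive integers, and let (s,t) = (s_1,…,s_d,t_1,…,t_e). Define the affine map φ : ℝ^{d+e} → ℝ^{d+e} by φ(x)_i = x_i for 1 ≤ i ≤ d and φ(x)_{d+j} = t_j − x_{d+j} for 1 ≤ j ≤ e. Then φ(P_{d+e}^{(s,t)}) = conv((P_d^{(s)} × {0}) ∪ ({0} × Q)), the free sum of P_d^{(s)} and Q, where Q = {y ∈ ℝ^e : 0 ≤ y_e/t_e ≤ y_{e−1}/t_{e−1} ≤ ⋯ ≤ y_1/t_1 ≤ 1} is the lecture hall polytope of the reversed sequence (t_e,…,t_1) with its coordinates listed in reverse order. In particular, P_{d+e}^{(s,t)} is unimodularly equivalent to the free sum P_d^{(s)} ⊕ Q. -/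

import Mathlib

open Pointwise BigOperators

/-- The `s`-lecture hall polytope
`P_d^(s) = {x ∈ ℝ^d : 0 ≤ x_1/s_1 ≤ x_2/s_2 ≤ ⋯ ≤ x_d/s_d ≤ 1}`
(indices shifted down by one: `x i` is the paper's `x_{i+1}`). -/
def lectureHall (d : ℕ) (s : Fin d → ℕ) : Set (Fin d → ℝ) :=
  {x | (∀ h : 0 < d, 0 ≤ x ⟨0, h⟩ / (s ⟨0, h⟩ : ℝ)) ∧
       (∀ i : Fin d, ∀ hi : (i : ℕ) + 1 < d,
          x i / (s i : ℝ) ≤ x ⟨(i : ℕ) + 1, hi⟩ / (s ⟨(i : ℕ) + 1, hi⟩ : ℝ)) ∧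
       (∀ h : 0 < d,
          x ⟨d - 1, Nat.sub_lt h Nat.one_pos⟩ / (s ⟨d - 1, Nat.sub_lt h Nat.one_pos⟩ : ℝ) ≤ 1)}

/-- The set of lattice points of `ℝ^d`. -/
def latticePoints (d : ℕ) : Set (Fin d → ℝ) := {x | ∀ i, ∃ n : ℤ, x i = (n : ℝ)}

/-- The dual polytope `Q^∨ = {y : ⟨x,y⟩ ≤ 1 for all x ∈ Q}`. -/
def dualPolytope {d : ℕ} (Q : Set (Fin d → ℝ)) : Set (Fin d → ℝ) :=
  {y | ∀ x ∈ Q, ∑ i, x i * y i ≤ 1}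

/-- A full-dimensional lattice polytope is reflexive if it is Fano (the only
lattice point of its interior is the origin) and its dual polytope is a lattice
polytope. -/
def IsReflexive {d : ℕ} (Q : Set (Fin d → ℝ)) : Prop :=
  interior Q ∩ latticePoints d = {0} ∧
  dualPolytope Q = convexHull ℝ (dualPolytope Q ∩ latticePoints d)

/-- Unimodular equivalence: `Q = f_U(P) + w` with `U` an integer matrix of
determinant `±1` and `w` an integer vector. -/
def UnimodularlyEquivalent {d : ℕ} (P Q : Set (Fin d → ℝ)) : Prop :=
  ∃ (U : Matrix (Fin d) (Fin d) ℤ) (w : Fin d → ℤ),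
    (U.det = 1 ∨ U.det = -1) ∧
    Q = (fun x => Matrix.vecMul x (U.map (fun a : ℤ => (a : ℝ))) + fun i => (w i : ℝ)) '' P

/-- `P` is Gorenstein of index `c`: `c` is the smallest positive integer such
that `cP` is unimodularly equivalent to a reflexive polytope. -/
def GorensteinOfIndex {d : ℕ} (P : Set (Fin d → ℝ)) (c : ℕ) : Prop :=
  0 < c ∧
  (∃ Q : Set (Fin d → ℝ), UnimodularlyEquivalent ((c : ℝ) • P) Q ∧ IsReflexive Q) ∧
  ∀ c' : ℕ, 0 < c' →
    (∃ Q : Set (Fin d → ℝ), UnimodularlyEquivalent ((c' : ℝ) • P) Q ∧ IsReflexive Q) →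
    c ≤ c'

/-- `P` is translation equivalent to a reflexive polytope. -/
def TranslationReflexive {d : ℕ} (P : Set (Fin d → ℝ)) : Prop :=
  ∃ w : Fin d → ℤ, IsReflexive ((fun x => x + fun i => (w i : ℝ)) '' P)

/-- With the conventions `e_0 = 0`, `s_0 = 1`, every position `0,…,d-1` of the
`s`-inversion sequence `e` is an ascent (`e i` is the paper's `e_{i+1}`). -/
def allAscents (d : ℕ) (s : Fin d → ℕ) (e : Fin d → ℤ) : Prop :=
  (∀ h : 0 < d, (0 : ℝ) / 1 < (e ⟨0, h⟩ : ℝ) / (s ⟨0, h⟩ : ℝ)) ∧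
  ∀ i : Fin d, ∀ hi : (i : ℕ) + 1 < d,
    (e i : ℝ) / (s i : ℝ) < (e ⟨(i : ℕ) + 1, hi⟩ : ℝ) / (s ⟨(i : ℕ) + 1, hi⟩ : ℝ)

/-- The integer decomposition property. -/
def HasIDP (d : ℕ) (P : Set (Fin d → ℝ)) : Prop :=
  ∀ k : ℕ, 0 < k → ∀ z : Fin d → ℤ,
    (fun i => (z i : ℝ)) ∈ (k : ℝ) • P →
    ∃ x : Fin k → Fin d → ℤ,
      (∀ j, (fun i => (x j i : ℝ)) ∈ P) ∧ ∀ i, (∑ j, x j i) = z i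


namespace LH15

variable {d e : ℕ}

lemma app_lt {α : Sort*} (u : Fin d → α) (v : Fin e → α) (k : ℕ) (hk : k < d) (hk2 : k < d + e) :
    Fin.append u v ⟨k, hk2⟩ = u ⟨k, hk⟩ := by
  have h : (⟨k, hk2⟩ : Fin (d + e)) = Fin.castAdd e ⟨k, hk⟩ := rfl
  rw [h, Fin.append_left]

lemma app_ge {α : Sort*} (u : Fin d → α) (v : Fin e → α) (k : ℕ) (hk : d ≤ k) (hk2 : k < d + e) :
    Fin.append u v ⟨k, hk2⟩ = v ⟨k - d, by omega⟩ := by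
  have h : (⟨k, hk2⟩ : Fin (d + e)) = Fin.natAdd d ⟨k - d, by omega⟩ := by
    ext; simp [Fin.natAdd]; omega
  rw [h, Fin.append_right]

/-- The chain conditions of the lecture hall polytope, without the `≤ 1` cap. -/
def sChain (s : Fin d → ℕ) (u : Fin d → ℝ) : Prop :=
  (∀ h : 0 < d, 0 ≤ u ⟨0, h⟩ / (s ⟨0, h⟩ : ℝ)) ∧
  (∀ i : Fin d, ∀ hi : (i : ℕ) + 1 < d,
      u i / (s i : ℝ) ≤ u ⟨(i : ℕ) + 1, hi⟩ / (s ⟨(i : ℕ) + 1, hi⟩ : ℝ))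

/-- The reversed chain conditions, without the `≤ 1` cap. -/
def tChain (t : Fin e → ℕ) (v : Fin e → ℝ) : Prop :=
  (∀ h : 0 < e, 0 ≤ v ⟨e - 1, Nat.sub_lt h Nat.one_pos⟩ / (t ⟨e - 1, Nat.sub_lt h Nat.one_pos⟩ : ℝ)) ∧
  (∀ j : Fin e, ∀ hj : (j : ℕ) + 1 < e,
      v ⟨(j : ℕ) + 1, hj⟩ / (t ⟨(j : ℕ) + 1, hj⟩ : ℝ) ≤ v j / (t j : ℝ))

lemma lectureHall_eq (s : Fin d → ℕ) :
    lectureHall d s = {u | sChain s u ∧ ∀ h : 0 < d,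
      u ⟨d - 1, Nat.sub_lt h Nat.one_pos⟩ / (s ⟨d - 1, Nat.sub_lt h Nat.one_pos⟩ : ℝ) ≤ 1} := by
  ext u
  constructor
  · rintro ⟨a, b, c⟩; exact ⟨⟨a, b⟩, c⟩
  · rintro ⟨⟨a, b⟩, c⟩; exact ⟨a, b, c⟩

lemma sChain_mono {s : Fin d → ℕ} {u : Fin d → ℝ} (h : sChain s u) :
    ∀ n (hn : n < d), ∀ m, ∀ hm : m ≤ n,
      u ⟨m, by omega⟩ / (s ⟨m, by omega⟩ : ℝ) ≤ u ⟨n, hn⟩ / (s ⟨n, hn⟩ : ℝ) := by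
  intro n
  induction n with
  | zero =>
    intro hn m hm
    have : m = 0 := by omega
    subst this; exact le_refl _
  | succ k ih =>
    intro hn m hm
    rcases Nat.eq_or_lt_of_le hm with h1 | h1
    · subst h1; exact le_refl _
    · exact le_trans (ih (by omega) m (by omega)) (h.2 ⟨k, by omega⟩ hn)

lemma sChain_nonneg {s : Fin d → ℕ} {u : Fin d → ℝ} (hd : 0 < d) (h : sChain s u) :
    ∀ n (hn : n < d), 0 ≤ u ⟨n, hn⟩ / (s ⟨n, hn⟩ : ℝ) :=
  fun n hn => le_trans (h.1 hd) (sChain_mono h n hn 0 (Nat.zero_le _))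

lemma sChain_le_top {s : Fin d → ℕ} {u : Fin d → ℝ} (hd : 0 < d) (h : sChain s u) :
    ∀ n (hn : n < d), u ⟨n, hn⟩ / (s ⟨n, hn⟩ : ℝ) ≤
      u ⟨d - 1, by omega⟩ / (s ⟨d - 1, by omega⟩ : ℝ) :=
  fun n hn => sChain_mono h (d - 1) (by omega) n (by omega)

lemma sChain_zero {s : Fin d → ℕ} {u : Fin d → ℝ} (hd : 0 < d) (hs : ∀ i, 0 < s i)
    (h : sChain s u)
    (htop : u ⟨d - 1, by omega⟩ / (s ⟨d - 1, by omega⟩ : ℝ) = 0) : u = 0 := by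
  funext i
  obtain ⟨n, hn⟩ := i
  have h1 := sChain_nonneg hd h n hn
  have h2 := sChain_le_top hd h n hn
  have h3 : u ⟨n, hn⟩ / (s ⟨n, hn⟩ : ℝ) = 0 := le_antisymm (htop ▸ h2) h1
  have hsne : ((s ⟨n, hn⟩ : ℕ) : ℝ) ≠ 0 := by
    exact_mod_cast (hs ⟨n, hn⟩).ne'
  have := (div_eq_zero_iff.mp h3).resolve_right hsne
  simpa using this

lemma sChain_smul {s : Fin d → ℕ} {u : Fin d → ℝ} {c : ℝ} (hc : 0 ≤ c) (h : sChain s u) :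
    sChain s (c • u) := by
  constructor
  · intro hd
    have : (c • u) ⟨0, hd⟩ / (s ⟨0, hd⟩ : ℝ) = c * (u ⟨0, hd⟩ / (s ⟨0, hd⟩ : ℝ)) := by
      simp [mul_div_assoc]
    rw [this]
    exact mul_nonneg hc (h.1 hd)
  · intro i hi
    have e1 : (c • u) i / (s i : ℝ) = c * (u i / (s i : ℝ)) := by simp [mul_div_assoc]
    have e2 : (c • u) ⟨(i : ℕ) + 1, hi⟩ / (s ⟨(i : ℕ) + 1, hi⟩ : ℝ)
        = c * (u ⟨(i : ℕ) + 1, hi⟩ / (s ⟨(i : ℕ) + 1, hi⟩ : ℝ)) := by simp [mul_div_assoc]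
    rw [e1, e2]
    exact mul_le_mul_of_nonneg_left (h.2 i hi) hc

lemma tChain_anti {t : Fin e → ℕ} {v : Fin e → ℝ} (h : tChain t v) :
    ∀ n (hn : n < e), ∀ m, ∀ hm : m ≤ n,
      v ⟨n, hn⟩ / (t ⟨n, hn⟩ : ℝ) ≤ v ⟨m, by omega⟩ / (t ⟨m, by omega⟩ : ℝ) := by
  intro n
  induction n with
  | zero =>
    intro hn m hm
    have : m = 0 := by omega
    subst this; exact le_refl _
  | succ k ih =>
    intro hn m hm
    rcases Nat.eq_or_lt_of_le hm with h1 | h1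
    · subst h1; exact le_refl _
    · exact le_trans (h.2 ⟨k, by omega⟩ hn) (ih (by omega) m (by omega))

lemma tChain_nonneg {t : Fin e → ℕ} {v : Fin e → ℝ} (he : 0 < e) (h : tChain t v) :
    ∀ n (hn : n < e), 0 ≤ v ⟨n, hn⟩ / (t ⟨n, hn⟩ : ℝ) :=
  fun n hn => le_trans (h.1 he) (tChain_anti h (e - 1) (by omega) n (by omega))

lemma tChain_le_top {t : Fin e → ℕ} {v : Fin e → ℝ} (he : 0 < e) (h : tChain t v) :
    ∀ n (hn : n < e), v ⟨n, hn⟩ / (t ⟨n, hn⟩ : ℝ) ≤ v ⟨0, he⟩ / (t ⟨0, he⟩ : ℝ) :=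
  fun n hn => tChain_anti h n hn 0 (Nat.zero_le _)

lemma tChain_zero {t : Fin e → ℕ} {v : Fin e → ℝ} (he : 0 < e) (ht : ∀ j, 0 < t j)
    (h : tChain t v) (htop : v ⟨0, he⟩ / (t ⟨0, he⟩ : ℝ) = 0) : v = 0 := by
  funext j
  obtain ⟨n, hn⟩ := j
  have h1 := tChain_nonneg he h n hn
  have h2 := tChain_le_top he h n hn
  have h3 : v ⟨n, hn⟩ / (t ⟨n, hn⟩ : ℝ) = 0 := le_antisymm (htop ▸ h2) h1
  have hsne : ((t ⟨n, hn⟩ : ℕ) : ℝ) ≠ 0 := by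
    exact_mod_cast (ht ⟨n, hn⟩).ne'
  have := (div_eq_zero_iff.mp h3).resolve_right hsne
  simpa using this

lemma tChain_smul {t : Fin e → ℕ} {v : Fin e → ℝ} {c : ℝ} (hc : 0 ≤ c) (h : tChain t v) :
    tChain t (c • v) := by
  constructor
  · intro he
    have : (c • v) ⟨e - 1, Nat.sub_lt he Nat.one_pos⟩ / (t ⟨e - 1, Nat.sub_lt he Nat.one_pos⟩ : ℝ)
        = c * (v ⟨e - 1, Nat.sub_lt he Nat.one_pos⟩ / (t ⟨e - 1, Nat.sub_lt he Nat.one_pos⟩ : ℝ)) := by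
      simp [mul_div_assoc]
    rw [this]
    exact mul_nonneg hc (h.1 he)
  · intro j hj
    have e1 : (c • v) j / (t j : ℝ) = c * (v j / (t j : ℝ)) := by simp [mul_div_assoc]
    have e2 : (c • v) ⟨(j : ℕ) + 1, hj⟩ / (t ⟨(j : ℕ) + 1, hj⟩ : ℝ)
        = c * (v ⟨(j : ℕ) + 1, hj⟩ / (t ⟨(j : ℕ) + 1, hj⟩ : ℝ)) := by simp [mul_div_assoc]
    rw [e1, e2]
    exact mul_le_mul_of_nonneg_left (h.2 j hj) hc



variable {d e : ℕ}

/-- The affine involution `φ`. -/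
def Phi (t : Fin e → ℕ) (z : Fin (d + e) → ℝ) : Fin (d + e) → ℝ :=
  fun i => if h : (i : ℕ) < d then z i
    else (t ⟨(i : ℕ) - d, Nat.sub_lt_left_of_lt_add (by omega) i.isLt⟩ : ℝ) - z i

lemma Phi_lt (t : Fin e → ℕ) (z : Fin (d + e) → ℝ) (k : ℕ) (hk : k < d) (h2 : k < d + e) :
    Phi t z ⟨k, h2⟩ = z ⟨k, h2⟩ := dif_pos hk

lemma Phi_ge (t : Fin e → ℕ) (z : Fin (d + e) → ℝ) (k : ℕ) (hk : d ≤ k) (h2 : k < d + e) :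
    Phi t z ⟨k, h2⟩ = (t ⟨k - d, by omega⟩ : ℝ) - z ⟨k, h2⟩ := dif_neg (show ¬ (k < d) by omega)

lemma Phi_invol (t : Fin e → ℕ) (z : Fin (d + e) → ℝ) : Phi t (Phi t z) = z := by
  funext i
  obtain ⟨k, hk⟩ := i
  by_cases h : k < d
  · rw [Phi_lt t _ k h hk, Phi_lt t z k h hk]
  · rw [Phi_ge t _ k (by omega) hk, Phi_ge t z k (by omega) hk]
    ring

/-- First block of coordinates. -/
def c1 (z : Fin (d + e) → ℝ) : Fin d → ℝ := fun i => z ⟨i, by have := i.isLt; omega⟩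

/-- Second block of coordinates. -/
def c2 (z : Fin (d + e) → ℝ) : Fin e → ℝ := fun j => z ⟨d + j, by have := j.isLt; omega⟩

/-- The membership conditions of the image `φ(P)`. -/
def Good (s : Fin d → ℕ) (t : Fin e → ℕ) (z : Fin (d + e) → ℝ) : Prop :=
  sChain s (c1 z) ∧ tChain t (c2 z) ∧
  ∀ (hd : 0 < d) (he : 0 < e),
    c1 z ⟨d - 1, Nat.sub_lt hd Nat.one_pos⟩ / (s ⟨d - 1, Nat.sub_lt hd Nat.one_pos⟩ : ℝ) +
      c2 z ⟨0, he⟩ / (t ⟨0, he⟩ : ℝ) ≤ 1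

lemma append_c (z : Fin (d + e) → ℝ) : Fin.append (c1 z) (c2 z) = z := by
  funext i
  obtain ⟨k, hk⟩ := i
  by_cases h : k < d
  · rw [app_lt _ _ k h hk]; rfl
  · rw [app_ge _ _ k (by omega) hk]
    show z ⟨d + (k - d), _⟩ = z ⟨k, hk⟩
    congr 1
    ext
    simp
    omega

lemma memP_iff (hd : 0 < d) (he : 0 < e) (s : Fin d → ℕ) (t : Fin e → ℕ)
    (w : Fin (d + e) → ℝ) :
    w ∈ lectureHall (d + e) (Fin.append s t) ↔
      (0 ≤ w ⟨0, by omega⟩ / (s ⟨0, hd⟩ : ℝ)) ∧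
      (∀ n, ∀ hn : n + 1 < d,
        w ⟨n, by omega⟩ / (s ⟨n, by omega⟩ : ℝ) ≤ w ⟨n + 1, by omega⟩ / (s ⟨n + 1, hn⟩ : ℝ)) ∧
      (w ⟨d - 1, by omega⟩ / (s ⟨d - 1, by omega⟩ : ℝ) ≤ w ⟨d, by omega⟩ / (t ⟨0, he⟩ : ℝ)) ∧
      (∀ m, ∀ hm : m + 1 < e,
        w ⟨d + m, by omega⟩ / (t ⟨m, by omega⟩ : ℝ) ≤
          w ⟨d + m + 1, by omega⟩ / (t ⟨m + 1, hm⟩ : ℝ)) ∧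
      (w ⟨d + e - 1, by omega⟩ / (t ⟨e - 1, by omega⟩ : ℝ) ≤ 1) := by
  constructor
  · rintro ⟨A, B, C⟩
    refine ⟨?_, ?_, ?_, ?_, ?_⟩
    · have := A (by omega)
      rwa [app_lt s t 0 hd] at this
    · intro n hn
      have := B ⟨n, by omega⟩ (show n + 1 < d + e by omega)
      rwa [app_lt s t n (by omega), app_lt s t (n + 1) hn] at this
    · have := B ⟨d - 1, by omega⟩ (show d - 1 + 1 < d + e by omega)
      simp only [show d - 1 + 1 = d from by omega] at this
      rw [app_lt s t (d - 1) (by omega), app_ge s t d (le_refl d)] at this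
      simp only [show d - d = 0 from by omega] at this
      exact this
    · intro m hm
      have := B ⟨d + m, by omega⟩ (show d + m + 1 < d + e by omega)
      rw [app_ge s t (d + m) (by omega), app_ge s t (d + m + 1) (by omega)] at this
      simp only [show d + m - d = m from by omega,
        show d + m + 1 - d = m + 1 from by omega] at this
      exact this
    · have := C (by omega)
      rw [app_ge s t (d + e - 1) (by omega)] at this
      simp only [show d + e - 1 - d = e - 1 from by omega] at this
      exact this
  · rintro ⟨h1, h2, h3, h4, h5⟩
    refine ⟨?_, ?_, ?_⟩
    · intro h
      rw [app_lt s t 0 hd]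
      exact h1
    · rintro ⟨n, hn⟩ hi
      simp only at hi
      by_cases hc1 : n + 1 < d
      · rw [app_lt s t n (by omega), app_lt s t (n + 1) hc1]
        exact h2 n hc1
      · by_cases hc2 : n + 1 = d
        · rw [app_lt s t n (by omega), app_ge s t (n + 1) (by omega)]
          simp only [show n + 1 - d = 0 from by omega]
          have hn1 : n = d - 1 := by omega
          subst hn1
          simp only [show d - 1 + 1 = d from by omega]
          exact h3
        · rw [app_ge s t n (by omega), app_ge s t (n + 1) (by omega)]
          simp only [show n + 1 - d = n - d + 1 from by omega]
          have := h4 (n - d) (by omega)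
          simp only [show d + (n - d) = n from by omega,
            show d + (n - d) + 1 = n + 1 from by omega] at this
          exact this
    · intro h
      rw [app_ge s t (d + e - 1) (by omega)]
      simp only [show d + e - 1 - d = e - 1 from by omega]
      exact h5



variable {d e : ℕ}

lemma sub_div_le_sub_div_iff {T1 T2 a b : ℝ} (h1 : 0 < T1) (h2 : 0 < T2) :
    (T1 - a) / T1 ≤ (T2 - b) / T2 ↔ b / T2 ≤ a / T1 := by
  rw [sub_div, sub_div, div_self h1.ne', div_self h2.ne']
  constructor <;> intro h <;> linarith

lemma sub_div_le_one_iff {T a : ℝ} (h : 0 < T) : (T - a) / T ≤ 1 ↔ 0 ≤ a / T := by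
  rw [sub_div, div_self h.ne']
  constructor <;> intro hh <;> linarith

lemma le_sub_div_iff {T a b : ℝ} (h : 0 < T) : b ≤ (T - a) / T ↔ b + a / T ≤ 1 := by
  rw [sub_div, div_self h.ne']
  constructor <;> intro hh <;> linarith

lemma memPhi (hd : 0 < d) (he : 0 < e) (s : Fin d → ℕ) (t : Fin e → ℕ)
    (ht : ∀ j, 0 < t j) (z : Fin (d + e) → ℝ) :
    Phi t z ∈ lectureHall (d + e) (Fin.append s t) ↔ Good s t z := by
  have tp : ∀ j : Fin e, (0 : ℝ) < (t j : ℝ) := fun j => by exact_mod_cast ht j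
  rw [memP_iff hd he]
  constructor
  · rintro ⟨p1, p2, p3, p4, p5⟩
    rw [Phi_lt t z 0 hd] at p1
    rw [Phi_lt t z (d - 1) (by omega), Phi_ge t z d (le_refl d)] at p3
    simp only [show d - d = 0 from by omega] at p3
    simp only [show d + e - 1 = d + (e - 1) from by omega] at p5
    rw [Phi_ge t z (d + (e - 1)) (by omega)] at p5
    simp only [show d + (e - 1) - d = e - 1 from by omega] at p5
    refine ⟨⟨fun _ => p1, ?_⟩, ⟨fun _ => ?_, ?_⟩, fun _ _ => ?_⟩
    · rintro ⟨n, hn⟩ hni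
      have := p2 n hni
      rw [Phi_lt t z n (by omega), Phi_lt t z (n + 1) hni] at this
      exact this
    · exact (sub_div_le_one_iff (tp ⟨e - 1, by omega⟩)).mp p5
    · rintro ⟨m, hm⟩ hmj
      have := p4 m hmj
      rw [Phi_ge t z (d + m) (by omega), Phi_ge t z (d + m + 1) (by omega)] at this
      simp only [show d + m - d = m from by omega,
        show d + m + 1 - d = m + 1 from by omega] at this
      exact (sub_div_le_sub_div_iff (tp ⟨m, by omega⟩) (tp ⟨m + 1, hmj⟩)).mp this
    · exact (le_sub_div_iff (tp ⟨0, he⟩)).mp p3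
  · rintro ⟨⟨q1, q2⟩, ⟨q3, q4⟩, q5⟩
    refine ⟨?_, ?_, ?_, ?_, ?_⟩
    · rw [Phi_lt t z 0 hd]
      exact q1 hd
    · intro n hn
      rw [Phi_lt t z n (by omega), Phi_lt t z (n + 1) (by omega)]
      exact q2 ⟨n, by omega⟩ hn
    · rw [Phi_lt t z (d - 1) (by omega), Phi_ge t z d (le_refl d)]
      simp only [show d - d = 0 from by omega]
      rw [le_sub_div_iff (tp ⟨0, he⟩)]
      exact q5 hd he
    · intro m hm
      rw [Phi_ge t z (d + m) (by omega), Phi_ge t z (d + m + 1) (by omega)]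
      simp only [show d + m - d = m from by omega,
        show d + m + 1 - d = m + 1 from by omega]
      rw [sub_div_le_sub_div_iff (tp ⟨m, by omega⟩) (tp ⟨m + 1, hm⟩)]
      exact q4 ⟨m, by omega⟩ hm
    · simp only [show d + e - 1 = d + (e - 1) from by omega]
      rw [Phi_ge t z (d + (e - 1)) (by omega)]
      simp only [show d + (e - 1) - d = e - 1 from by omega]
      rw [sub_div_le_one_iff (tp ⟨e - 1, by omega⟩)]
      exact q3 he

lemma image_eq_good (hd : 0 < d) (he : 0 < e) (s : Fin d → ℕ) (t : Fin e → ℕ)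
    (ht : ∀ j, 0 < t j) :
    Phi t '' lectureHall (d + e) (Fin.append s t) = {z | Good s t z} := by
  ext z
  simp only [Set.mem_image, Set.mem_setOf_eq]
  constructor
  · rintro ⟨w, hw, rfl⟩
    exact (memPhi hd he s t ht (Phi t w)).mp (by rw [Phi_invol]; exact hw)
  · intro h
    exact ⟨Phi t z, (memPhi hd he s t ht z).mpr h, Phi_invol t z⟩




lemma Phi_affine (t : Fin e → ℕ) (z1 z2 : Fin (d + e) → ℝ) {a b : ℝ} (hab : a + b = 1) :
    Phi t (a • z1 + b • z2) = a • Phi t z1 + b • Phi t z2 := by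
  have key : ∀ T u1 u2 : ℝ, T - (a * u1 + b * u2) = a * (T - u1) + b * (T - u2) := by
    intro T u1 u2; linear_combination (-T) * hab
  funext i
  obtain ⟨k, hk⟩ := i
  by_cases h : k < d
  · simp only [Pi.add_apply, Pi.smul_apply, smul_eq_mul, Phi_lt t _ k h hk]
  · simp only [Pi.add_apply, Pi.smul_apply, smul_eq_mul, Phi_ge t _ k (by omega) hk]
    exact key _ _ _

lemma lectureHall_convex (n : ℕ) (s : Fin n → ℕ) : Convex ℝ (lectureHall n s) := by
  intro x hx y hy a b ha hb hab
  obtain ⟨p1, p2, p3⟩ := hx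
  obtain ⟨q1, q2, q3⟩ := hy
  have hdiv : ∀ u v c : ℝ, (a * u + b * v) / c = a * (u / c) + b * (v / c) := by
    intro u v c; ring
  refine ⟨fun h => ?_, fun i hi => ?_, fun h => ?_⟩
  · show 0 ≤ (a * x ⟨0, h⟩ + b * y ⟨0, h⟩) / ((s ⟨0, h⟩ : ℕ) : ℝ)
    rw [hdiv]
    exact add_nonneg (mul_nonneg ha (p1 h)) (mul_nonneg hb (q1 h))
  · show (a * x i + b * y i) / ((s i : ℕ) : ℝ) ≤
      (a * x ⟨(i : ℕ) + 1, hi⟩ + b * y ⟨(i : ℕ) + 1, hi⟩) / ((s ⟨(i : ℕ) + 1, hi⟩ : ℕ) : ℝ)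
    rw [hdiv, hdiv]
    exact add_le_add (mul_le_mul_of_nonneg_left (p2 i hi) ha)
      (mul_le_mul_of_nonneg_left (q2 i hi) hb)
  · show (a * x ⟨n - 1, Nat.sub_lt h Nat.one_pos⟩ + b * y ⟨n - 1, Nat.sub_lt h Nat.one_pos⟩) /
      ((s ⟨n - 1, Nat.sub_lt h Nat.one_pos⟩ : ℕ) : ℝ) ≤ 1
    rw [hdiv]
    nlinarith [p3 h, q3 h, mul_le_mul_of_nonneg_left (p3 h) ha,
      mul_le_mul_of_nonneg_left (q3 h) hb]

lemma good_convex (hd : 0 < d) (he : 0 < e) (s : Fin d → ℕ) (t : Fin e → ℕ)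
    (ht : ∀ j, 0 < t j) : Convex ℝ {z : Fin (d + e) → ℝ | Good s t z} := by
  intro z1 h1 z2 h2 a b ha hb hab
  have m1 := (memPhi hd he s t ht z1).mpr h1
  have m2 := (memPhi hd he s t ht z2).mpr h2
  have hres := lectureHall_convex (d + e) (Fin.append s t) m1 m2 ha hb hab
  have : Phi t (a • z1 + b • z2) ∈ lectureHall (d + e) (Fin.append s t) := by
    rw [Phi_affine t z1 z2 hab]; exact hres
  exact (memPhi hd he s t ht _).mp this

lemma tChain_zero' (t : Fin e → ℕ) : tChain t (0 : Fin e → ℝ) :=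
  ⟨fun _ => by simp, fun _ _ => by simp⟩

lemma sChain_zero' (s : Fin d → ℕ) : sChain s (0 : Fin d → ℝ) :=
  ⟨fun _ => by simp, fun _ _ => by simp⟩

lemma memQ (t : Fin e → ℕ) (v : Fin e → ℝ) :
    ((fun j : Fin e => v (Fin.rev j)) ∈ lectureHall e (fun j : Fin e => t (Fin.rev j))) ↔
      tChain t v ∧ ∀ h : 0 < e, v ⟨0, h⟩ / (t ⟨0, h⟩ : ℝ) ≤ 1 := by
  have hrev : ∀ (a : ℕ) (ha : a < e) (b : ℕ) (hb : b < e), a + b + 1 = e →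
      Fin.rev (⟨a, ha⟩ : Fin e) = ⟨b, hb⟩ := by
    intro a ha b hb hab; ext; rw [Fin.val_rev]; simp; omega
  constructor
  · rintro ⟨A, B, C⟩
    refine ⟨⟨fun h => ?_, fun j hj => ?_⟩, fun h => ?_⟩
    · have h2 : 0 ≤ v (Fin.rev ⟨0, h⟩) / ((t (Fin.rev ⟨0, h⟩) : ℕ) : ℝ) := A h
      rw [hrev 0 h (e - 1) (by omega) (by omega)] at h2
      exact h2
    · obtain ⟨jv, hjv⟩ := j
      have hj' : jv + 1 < e := hj
      have h2 : v (Fin.rev ⟨e - 1 - (jv + 1), by omega⟩) /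
            ((t (Fin.rev ⟨e - 1 - (jv + 1), by omega⟩) : ℕ) : ℝ) ≤
          v (Fin.rev ⟨e - 1 - (jv + 1) + 1, by omega⟩) /
            ((t (Fin.rev ⟨e - 1 - (jv + 1) + 1, by omega⟩) : ℕ) : ℝ) :=
        B ⟨e - 1 - (jv + 1), by omega⟩ (show e - 1 - (jv + 1) + 1 < e by omega)
      rw [hrev (e - 1 - (jv + 1)) (by omega) (jv + 1) hj' (by omega),
        hrev (e - 1 - (jv + 1) + 1) (by omega) jv (by omega) (by omega)] at h2
      exact h2
    · have h2 : v (Fin.rev ⟨e - 1, Nat.sub_lt h Nat.one_pos⟩) /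
          ((t (Fin.rev ⟨e - 1, Nat.sub_lt h Nat.one_pos⟩) : ℕ) : ℝ) ≤ 1 := C h
      rw [hrev (e - 1) (by omega) 0 h (by omega)] at h2
      exact h2
  · rintro ⟨⟨q1, q2⟩, q3⟩
    refine ⟨fun h => ?_, fun j hj => ?_, fun h => ?_⟩
    · show 0 ≤ v (Fin.rev ⟨0, h⟩) / ((t (Fin.rev ⟨0, h⟩) : ℕ) : ℝ)
      rw [hrev 0 h (e - 1) (by omega) (by omega)]
      exact q1 h
    · obtain ⟨jv, hjv⟩ := j
      have hj' : jv + 1 < e := hj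
      show v (Fin.rev ⟨jv, hjv⟩) / ((t (Fin.rev ⟨jv, hjv⟩) : ℕ) : ℝ) ≤
        v (Fin.rev ⟨jv + 1, hj'⟩) / ((t (Fin.rev ⟨jv + 1, hj'⟩) : ℕ) : ℝ)
      rw [hrev jv hjv (e - 1 - jv) (by omega) (by omega),
        hrev (jv + 1) hj' (e - 1 - (jv + 1)) (by omega) (by omega)]
      have h2 := q2 ⟨e - 1 - (jv + 1), by omega⟩ (show e - 1 - (jv + 1) + 1 < e by omega)
      simp only [show e - 1 - (jv + 1) + 1 = e - 1 - jv from by omega] at h2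
      exact h2
    · show v (Fin.rev ⟨e - 1, Nat.sub_lt h Nat.one_pos⟩) /
        ((t (Fin.rev ⟨e - 1, Nat.sub_lt h Nat.one_pos⟩) : ℕ) : ℝ) ≤ 1
      rw [hrev (e - 1) (by omega) 0 h (by omega)]
      exact q3 h

lemma good_eq_hull (hd : 0 < d) (he : 0 < e) (s : Fin d → ℕ) (t : Fin e → ℕ)
    (hs : ∀ i, 0 < s i) (ht : ∀ j, 0 < t j) :
    {z : Fin (d + e) → ℝ | Good s t z} =
      convexHull ℝ
        (((fun x : Fin d → ℝ => Fin.append x (0 : Fin e → ℝ)) '' lectureHall d s) ∪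
         ((fun y : Fin e → ℝ => Fin.append (0 : Fin d → ℝ) y) ''
           {y : Fin e → ℝ | (fun j : Fin e => y (Fin.rev j)) ∈
              lectureHall e (fun j : Fin e => t (Fin.rev j))})) := by
  apply Set.Subset.antisymm
  · intro z hz
    obtain ⟨hu, hv, hcap⟩ := hz
    have hα0 : 0 ≤ c1 z ⟨d - 1, by omega⟩ / (s ⟨d - 1, by omega⟩ : ℝ) :=
      sChain_nonneg hd hu (d - 1) (by omega)
    have hβ0 : 0 ≤ c2 z ⟨0, he⟩ / (t ⟨0, he⟩ : ℝ) := tChain_nonneg he hv 0 he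
    have hsum := hcap hd he
    by_cases hβz : c2 z ⟨0, he⟩ / (t ⟨0, he⟩ : ℝ) = 0
    · -- second block vanishes
      have hv0 : c2 z = 0 := tChain_zero he ht hv hβz
      apply subset_convexHull ℝ _
      left
      refine ⟨c1 z, ?_, ?_⟩
      · rw [lectureHall_eq]
        exact ⟨hu, fun _ => by linarith⟩
      · show Fin.append (c1 z) (0 : Fin e → ℝ) = z
        rw [← hv0]
        exact append_c z
    · by_cases hβ1 : c2 z ⟨0, he⟩ / (t ⟨0, he⟩ : ℝ) = 1
      · -- first block vanishes
        have hα : c1 z ⟨d - 1, by omega⟩ / (s ⟨d - 1, by omega⟩ : ℝ) = 0 := by linarith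
        have hu0 : c1 z = 0 := sChain_zero hd hs hu hα
        apply subset_convexHull ℝ _
        right
        refine ⟨c2 z, ?_, ?_⟩
        · show (fun j : Fin e => c2 z (Fin.rev j)) ∈
            lectureHall e (fun j : Fin e => t (Fin.rev j))
          exact (memQ t (c2 z)).mpr ⟨hv, fun _ => by linarith⟩
        · show Fin.append (0 : Fin d → ℝ) (c2 z) = z
          rw [← hu0]
          exact append_c z
      · have hβpos : 0 < c2 z ⟨0, he⟩ / (t ⟨0, he⟩ : ℝ) := lt_of_le_of_ne hβ0 (Ne.symm hβz)
        have hβlt1 : c2 z ⟨0, he⟩ / (t ⟨0, he⟩ : ℝ) < 1 :=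
          lt_of_le_of_ne (by linarith) hβ1
        set β := c2 z ⟨0, he⟩ / (t ⟨0, he⟩ : ℝ) with hβdef
        have h1βpos : 0 < 1 - β := by linarith
        have hA : Fin.append ((1 - β)⁻¹ • c1 z) (0 : Fin e → ℝ) ∈
            (fun x : Fin d → ℝ => Fin.append x (0 : Fin e → ℝ)) '' lectureHall d s := by
          refine ⟨(1 - β)⁻¹ • c1 z, ?_, rfl⟩
          rw [lectureHall_eq]
          refine ⟨sChain_smul (by positivity) hu, fun _ => ?_⟩
          rw [Pi.smul_apply, smul_eq_mul, mul_div_assoc, inv_mul_le_iff₀ h1βpos, mul_one]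
          linarith
        have hB : Fin.append (0 : Fin d → ℝ) (β⁻¹ • c2 z) ∈
            (fun y : Fin e → ℝ => Fin.append (0 : Fin d → ℝ) y) ''
              {y : Fin e → ℝ | (fun j : Fin e => y (Fin.rev j)) ∈
                lectureHall e (fun j : Fin e => t (Fin.rev j))} := by
          refine ⟨β⁻¹ • c2 z, ?_, rfl⟩
          show (fun j : Fin e => (β⁻¹ • c2 z) (Fin.rev j)) ∈
            lectureHall e (fun j : Fin e => t (Fin.rev j))
          refine (memQ t (β⁻¹ • c2 z)).mpr ⟨tChain_smul (by positivity) hv, fun _ => ?_⟩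
          rw [Pi.smul_apply, smul_eq_mul, mul_div_assoc, inv_mul_le_iff₀ hβpos, mul_one]
        have hzAB : z = (1 - β) • Fin.append ((1 - β)⁻¹ • c1 z) (0 : Fin e → ℝ) +
            β • Fin.append (0 : Fin d → ℝ) (β⁻¹ • c2 z) := by
          funext i
          obtain ⟨k, hk⟩ := i
          by_cases h : k < d
          · simp only [Pi.add_apply, Pi.smul_apply, smul_eq_mul,
              app_lt _ _ k h hk, Pi.zero_apply]
            rw [← mul_assoc, mul_inv_cancel₀ (ne_of_gt h1βpos), one_mul, mul_zero, add_zero]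
            rfl
          · simp only [Pi.add_apply, Pi.smul_apply, smul_eq_mul,
              app_ge _ _ k (le_of_not_gt h) hk, Pi.zero_apply]
            rw [mul_zero, zero_add, ← mul_assoc, mul_inv_cancel₀ (ne_of_gt hβpos), one_mul]
            show z ⟨k, hk⟩ = z ⟨d + (k - d), by omega⟩
            congr 1
            ext
            show k = d + (k - d)
            omega
        have ha' : (0 : ℝ) ≤ 1 - β := by linarith
        have hab' : (1 - β) + β = 1 := by ring
        rw [hzAB]
        refine (convex_convexHull ℝ _) ?_ ?_ ha' (le_of_lt hβpos) hab'
        · exact subset_convexHull ℝ _ (Or.inl hA)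
        · exact subset_convexHull ℝ _ (Or.inr hB)
  · apply convexHull_min
    · rintro z (⟨x, hx, rfl⟩ | ⟨y, hy, rfl⟩)
      · rw [lectureHall_eq] at hx
        obtain ⟨hc, hcap⟩ := hx
        have e1 : c1 (Fin.append x (0 : Fin e → ℝ)) = x := by
          funext i
          show Fin.append x (0 : Fin e → ℝ) ⟨(i : ℕ), _⟩ = x i
          rw [app_lt _ _ (i : ℕ) i.isLt]
        have e2 : c2 (Fin.append x (0 : Fin e → ℝ)) = 0 := by
          funext j
          show Fin.append x (0 : Fin e → ℝ) ⟨d + (j : ℕ), _⟩ = _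
          rw [app_ge _ _ (d + (j : ℕ)) (by omega)]
          rfl
        refine ⟨by rw [e1]; exact hc, by rw [e2]; exact tChain_zero' t, fun hd' he' => ?_⟩
        rw [e1, e2, Pi.zero_apply, zero_div, add_zero]
        exact hcap hd'
      · obtain ⟨hvq, hcapq⟩ := (memQ t y).mp hy
        have e1 : c1 (Fin.append (0 : Fin d → ℝ) y) = 0 := by
          funext i
          show Fin.append (0 : Fin d → ℝ) y ⟨(i : ℕ), _⟩ = _
          rw [app_lt _ _ (i : ℕ) i.isLt]
        have e2 : c2 (Fin.append (0 : Fin d → ℝ) y) = y := by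
          funext j
          show Fin.append (0 : Fin d → ℝ) y ⟨d + (j : ℕ), _⟩ = y j
          rw [app_ge _ _ (d + (j : ℕ)) (by omega)]
          congr 1
          ext
          simp
        refine ⟨by rw [e1]; exact sChain_zero' s, by rw [e2]; exact hvq, fun hd' he' => ?_⟩
        rw [e1, e2, Pi.zero_apply, zero_div, zero_add]
        exact hcapq he'
    · exact good_convex hd he s t ht

end LH15


/-- the affine map `φ` fixing the first `d` coordinates and
sending `x_{d+j} ↦ t_j - x_{d+j}` maps `P_{d+e}^{(s,t)}` onto the free sum of
`P_d^(s)` and the lecture hall polytope `Q` of the reversed sequence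
`(t_e, …, t_1)` with its coordinates listed in reverse order; in particular
`P_{d+e}^{(s,t)}` is unimodularly equivalent to this free sum. -/
theorem stmt_15 (d e : ℕ) (hd : 0 < d) (he : 0 < e)
    (s : Fin d → ℕ) (t : Fin e → ℕ) (hs : ∀ i, 0 < s i) (ht : ∀ j, 0 < t j) :
    ((fun (x : Fin (d + e) → ℝ) (i : Fin (d + e)) =>
        if h : (i : ℕ) < d then x i
        else (t ⟨(i : ℕ) - d, by have := i.isLt; omega⟩ : ℝ) - x i) ''
          lectureHall (d + e) (Fin.append s t) =
      convexHull ℝ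
        (((fun x : Fin d → ℝ => Fin.append x (0 : Fin e → ℝ)) '' lectureHall d s) ∪
         ((fun y : Fin e → ℝ => Fin.append (0 : Fin d → ℝ) y) ''
           {y : Fin e → ℝ | (fun j : Fin e => y (Fin.rev j)) ∈
              lectureHall e (fun j : Fin e => t (Fin.rev j))}))) ∧
    UnimodularlyEquivalent (lectureHall (d + e) (Fin.append s t))
      (convexHull ℝ
        (((fun x : Fin d → ℝ => Fin.append x (0 : Fin e → ℝ)) '' lectureHall d s) ∪
         ((fun y : Fin e → ℝ => Fin.append (0 : Fin d → ℝ) y) ''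
           {y : Fin e → ℝ | (fun j : Fin e => y (Fin.rev j)) ∈
              lectureHall e (fun j : Fin e => t (Fin.rev j))}))) := by
  have hmain := (LH15.image_eq_good hd he s t ht).trans (LH15.good_eq_hull hd he s t hs ht)
  refine ⟨hmain, ?_⟩
  refine ⟨Matrix.diagonal (fun i : Fin (d + e) => if (i : ℕ) < d then (1 : ℤ) else -1),
    (fun i : Fin (d + e) => if h : (i : ℕ) < d then (0 : ℤ)
      else (t ⟨(i : ℕ) - d, by have := i.isLt; omega⟩ : ℤ)), ?_, ?_⟩
  · rw [Matrix.det_diagonal]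
    have hu : IsUnit (∏ i : Fin (d + e), (if ((i : ℕ) < d) then (1 : ℤ) else -1)) := by
      apply Finset.prod_induction _ IsUnit (fun a b => IsUnit.mul) isUnit_one
      intro i _
      by_cases h : (i : ℕ) < d
      · simp [h]
      · simp [h]
    exact Int.isUnit_iff.mp hu
  · rw [← hmain]
    refine congrArg (· '' lectureHall (d + e) (Fin.append s t)) ?_
    funext x i
    rw [Matrix.diagonal_map (by simp)]
    simp only [Pi.add_apply]
    rw [Matrix.vecMul_diagonal]
    show LH15.Phi t x i = _
    obtain ⟨k, hk⟩ := i
    by_cases h : k < d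
    · rw [LH15.Phi_lt t x k h hk]
      simp [h]
    · rw [LH15.Phi_ge t x k (by omega) hk]
      simp only [h, if_false, dif_neg h]
      push_cast
      ring
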